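/- In the q-boson algebra with relation a a⁺ − q² a⁺ a = 1, the divided powers satisfy a^(n) · (a⁺)^m = Σ_{s=0}^{m} q^{n(s+m)} q^{(s−m)(s+m+1)/2} [m choose s]_q (a⁺)^s a^(n−m+s), for all n ≥ m ≥ 0, where a^(k) = a^k/[k]_q!. -/

import Mathlib

noncomputable section

/-- The field `ℂ(q)` of rational functions. -/
abbrev Fq : Type := RatFunc ℂ

/-- The indeterminate `q`. -/
def q : Fq := RatFunc.X

/-- The balanced quantum integer `[n]_q = (q^n - q^{-n})/(q - q^{-1})`. -/
def qint (n : ℤ) : Fq := (q ^ n - q ^ (-n)) / (q - q⁻¹)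

/-- The quantum factorial `[m]_q!`. -/
def qfact : ℕ → Fq
  | 0 => 1
  | n + 1 => qint (n + 1) * qfact n

/-- The balanced Gaussian binomial coefficient `[n choose k]_q`,
with the convention that it is `0` for `k < 0`. -/
def qbinom (n k : ℤ) : Fq :=
  if k < 0 then 0
  else (∏ i ∈ Finset.range k.toNat, qint (n - i)) / qfact k.toNat

lemma q_ne_zero : q ≠ 0 := RatFunc.X_ne_zero

lemma q_pow_ne_one (k : ℕ) (hk : k ≠ 0) : q ^ k ≠ 1 := by
  intro hh
  have : algebraMap (Polynomial ℂ) Fq (Polynomial.X ^ k) = algebraMap (Polynomial ℂ) Fq 1 := by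
    simpa [map_pow, RatFunc.algebraMap_X, q] using hh
  have h2 := RatFunc.algebraMap_injective ℂ this
  have := congrArg Polynomial.natDegree h2
  simp [Polynomial.natDegree_X_pow] at this
  exact hk this

lemma q_zpow_ne_one (z : ℤ) (hz : z ≠ 0) : q ^ z ≠ 1 := by
  rcases lt_trichotomy z 0 with hneg | rfl | hpos
  · intro hh
    have : q ^ (-z) = 1 := by
      rw [← inv_inj]
      simpa [← zpow_neg] using hh
    rw [show (-z) = ((-z).toNat : ℤ) by omega, zpow_natCast] at this
    exact q_pow_ne_one _ (by omega) this
  · exact absurd rfl hz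
  · rw [show z = (z.toNat : ℤ) by omega, zpow_natCast]
    exact q_pow_ne_one _ (by omega)

lemma d_ne_zero : q - q⁻¹ ≠ 0 := by
  intro hh
  have h1 : q * (q - q⁻¹) = q ^ (2:ℤ) - 1 := by
    have : q * q⁻¹ = 1 := mul_inv_cancel₀ q_ne_zero
    rw [mul_sub, this, zpow_two]
  have : q ^ (2:ℤ) = 1 := by
    rw [hh, mul_zero] at h1
    linear_combination -h1
  exact q_zpow_ne_one 2 (by norm_num) this

lemma qint_ne_zero (n : ℤ) (hn : n ≠ 0) : qint n ≠ 0 := by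
  unfold qint
  apply div_ne_zero _ d_ne_zero
  intro hh
  have h1 : q ^ n = q ^ (-n) := by linear_combination hh
  have : q ^ (2*n) = 1 := by
    have h2 : q ^ n * q ^ n = q ^ (-n) * q ^ n := by rw [h1]
    rw [← zpow_add₀ q_ne_zero, ← zpow_add₀ q_ne_zero] at h2
    simpa [two_mul] using h2
  exact q_zpow_ne_one _ (by omega) this

lemma qfact_ne_zero (k : ℕ) : qfact k ≠ 0 := by
  induction k with
  | zero => simp [qfact]
  | succ n ih => exact mul_ne_zero (qint_ne_zero _ (by omega)) ih

lemma qint_add (x y : ℤ) : qint (x + y) = q ^ y * qint x + q ^ (-x) * qint y := by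
  unfold qint
  rw [← mul_div_assoc, ← mul_div_assoc, ← add_div]
  congr 1
  rw [neg_add, zpow_add₀ q_ne_zero, zpow_add₀ q_ne_zero]
  ring

lemma qint_one : qint 1 = 1 := by
  unfold qint
  rw [div_eq_one_iff_eq d_ne_zero, zpow_one, zpow_neg, zpow_one]

/-- Triangular numbers. -/
def Tn : ℕ → ℕ
  | 0 => 0
  | k + 1 => Tn k + k + 1

lemma two_Tn (k : ℕ) : 2 * Tn k = k * (k + 1) := by
  induction k with
  | zero => simp [Tn]
  | succ n ih => simp only [Tn]; ring_nf; ring_nf at ih; omega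

lemma E_eq (m s : ℕ) : (((s:ℤ) - m) * ((s:ℤ) + m + 1)) / 2 = (Tn s : ℤ) - Tn m := by
  have key : ((s:ℤ) - m) * ((s:ℤ) + m + 1) = 2 * (Tn s : ℤ) - 2 * (Tn m : ℤ) := by
    have hs' : 2 * ((Tn s : ℤ)) = (s : ℤ) * ((s:ℤ) + 1) := by
      have h := congrArg (fun t : ℕ => (t:ℤ)) (two_Tn s); push_cast at h; linear_combination h
    have hm' : 2 * ((Tn m : ℤ)) = (m : ℤ) * ((m:ℤ) + 1) := by
      have h := congrArg (fun t : ℕ => (t:ℤ)) (two_Tn m); push_cast at h; linear_combination h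
    linear_combination hm' - hs'
  rw [key]
  omega

lemma Tn_zero : Tn 0 = 0 := rfl

lemma Tn_succ_cast (k : ℕ) : (Tn (k+1) : ℤ) = Tn k + k + 1 := by
  show ((Tn k + k + 1 : ℕ) : ℤ) = _
  push_cast
  ring

lemma qbinom_nat (m s : ℕ) :
    qbinom m s = (∏ i ∈ Finset.range s, qint ((m:ℤ) - i)) / qfact s := by
  unfold qbinom
  simp

lemma qbinom_zero (z : ℤ) : qbinom z 0 = 1 := by
  simp [qbinom, qfact]

lemma qbinom_overflow (m : ℕ) : qbinom m (m + 1) = 0 := by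
  rw [show ((m:ℤ) + 1) = ((m+1 : ℕ) : ℤ) by push_cast; ring, qbinom_nat]
  apply div_eq_zero_iff.mpr
  left
  apply Finset.prod_eq_zero (Finset.mem_range.mpr (Nat.lt_succ_self m))
  simp [qint]

lemma qbinom_pascal (m s : ℕ) :
    qbinom (m + 1) (s + 1) =
      q ^ ((s:ℤ) + 1) * qbinom m (s + 1) + q ^ ((s:ℤ) - m) * qbinom m s := by
  rw [show ((m:ℤ) + 1) = ((m+1:ℕ):ℤ) by push_cast; ring,
      show ((s:ℤ) + 1) = ((s+1:ℕ):ℤ) by push_cast; ring,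
      qbinom_nat, qbinom_nat, qbinom_nat]
  have hnum : (∏ i ∈ Finset.range (s+1), qint (((m+1:ℕ):ℤ) - i)) =
      qint ((m:ℤ) + 1) * ∏ i ∈ Finset.range s, qint ((m:ℤ) - i) := by
    rw [Finset.prod_range_succ', mul_comm]
    congr 1
    apply Finset.prod_congr rfl
    intro i _
    congr 1
    push_cast
    ring
  rw [hnum]
  have hsplit : qint ((m:ℤ) + 1) =
      q ^ ((s:ℤ) + 1) * qint ((m:ℤ) - s) + q ^ ((s:ℤ) - m) * qint ((s:ℤ) + 1) := by
    have := qint_add ((m:ℤ) - s) ((s:ℤ) + 1)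
    rw [show ((m:ℤ) - s) + ((s:ℤ) + 1) = (m:ℤ) + 1 by ring] at this
    rw [this]
    congr 2
    ring
  have hprod2 : (∏ i ∈ Finset.range (s+1), qint ((m:ℤ) - i)) =
      (∏ i ∈ Finset.range s, qint ((m:ℤ) - i)) * qint ((m:ℤ) - s) := by
    rw [Finset.prod_range_succ]
  rw [hsplit, hprod2]
  have hqf : qfact (s+1) = qint ((s:ℤ)+1) * qfact s := by
    simp [qfact]
  rw [hqf]
  have h1 := qfact_ne_zero s
  have h2 := qint_ne_zero ((s:ℤ)+1) (by omega)
  field_simp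
  push_cast
  ring

lemma pow_mul_ap {A : Type*} [Ring A] [Algebra Fq A]
    (a ap : A) (h : a * ap - (q ^ 2 : Fq) • (ap * a) = 1) (j : ℕ) :
    a ^ (j+1) * ap = (q ^ (2*(j:ℤ)+2)) • (ap * a ^ (j+1))
      + (q ^ (j:ℤ) * qint (j+1)) • a ^ j := by
  have h' : a * ap = (q ^ 2 : Fq) • (ap * a) + 1 := sub_eq_iff_eq_add'.mp h
  induction j with
  | zero =>
    simpa [qint_one, zpow_two, pow_two] using h'
  | succ j ih =>
    have step : a ^ (j+2) * ap = (q ^ 2 : Fq) • ((a ^ (j+1) * ap) * a) + a ^ (j+1) := by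
      calc a ^ (j+2) * ap = a ^ (j+1) * (a * ap) := by rw [pow_succ, mul_assoc]
        _ = a ^ (j+1) * ((q ^ 2 : Fq) • (ap * a) + 1) := by rw [h']
        _ = (q ^ 2 : Fq) • ((a ^ (j+1) * ap) * a) + a ^ (j+1) := by
          rw [mul_add, mul_one, mul_smul_comm, ← mul_assoc]
    rw [step, ih]
    have harr : ap * a ^ (j+1) * a = ap * a ^ (j+1+1) := by rw [mul_assoc, ← pow_succ]
    have harr2 : a ^ j * a = a ^ (j+1) := by rw [pow_succ]
    rw [add_mul, smul_mul_assoc, smul_mul_assoc, smul_add, smul_smul, smul_smul, harr, harr2]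
    have hq2 : (q ^ 2 : Fq) = q ^ (2:ℤ) := by norm_cast
    have hsc1 : (q ^ 2 : Fq) * q ^ (2*(j:ℤ)+2) = q ^ (2*((j:ℤ)+1)+2) := by
      rw [hq2, ← zpow_add₀ q_ne_zero]; ring_nf
    have hsc : q ^ ((j:ℤ)+1) * qint ((j:ℤ)+1+1) = (q ^ 2 : Fq) * (q ^ (j:ℤ) * qint ((j:ℤ)+1)) + 1 := by
      rw [qint_add ((j:ℤ)+1) 1, qint_one, hq2]
      rw [mul_add, ← mul_assoc, ← mul_assoc, ← mul_assoc, ← zpow_add₀ q_ne_zero,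
          ← zpow_add₀ q_ne_zero, ← zpow_add₀ q_ne_zero]
      rw [show ((j:ℤ) + 1 + (-((j:ℤ)+1))) = 0 by ring, show ((j:ℤ)+1+1) = 2 + (j:ℤ) by ring,
          zpow_zero, mul_one]
    push_cast
    rw [hsc1, hsc, add_smul, one_smul]
    abel

lemma dpow_mul_ap {A : Type*} [Ring A] [Algebra Fq A]
    (a ap : A) (h : a * ap - (q ^ 2 : Fq) • (ap * a) = 1) (j : ℕ) :
    ((qfact (j+1))⁻¹ • a ^ (j+1)) * ap
      = (q ^ (2*(j:ℤ)+2)) • (ap * ((qfact (j+1))⁻¹ • a ^ (j+1)))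
        + (q ^ (j:ℤ)) • ((qfact j)⁻¹ • a ^ j) := by
  have hR1 : (q ^ (2*(j:ℤ)+2) : Fq) • (ap * ((qfact (j+1))⁻¹ • a ^ (j+1)))
      = (q ^ (2*(j:ℤ)+2) * (qfact (j+1))⁻¹) • (ap * a ^ (j+1)) := by
    rw [mul_smul_comm, smul_smul]
  have hR2 : (q ^ (j:ℤ) : Fq) • ((qfact j)⁻¹ • a ^ j)
      = (q ^ (j:ℤ) * (qfact j)⁻¹) • a ^ j := smul_smul _ _ _
  rw [hR1, hR2, smul_mul_assoc, pow_mul_ap a ap h j, smul_add, smul_smul, smul_smul]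
  congr 1
  · rw [mul_comm]
  · congr 1
    have h1 := qfact_ne_zero j
    have h2 := qint_ne_zero ((j:ℤ)+1) (by omega)
    have hqf : qfact (j+1) = qint ((j:ℤ)+1) * qfact j := by simp [qfact]
    rw [hqf]
    push_cast
    field_simp

lemma term_step {A : Type*} [Ring A] [Algebra Fq A]
    (a ap : A) (h : a * ap - (q ^ 2 : Fq) • (ap * a) = 1) (c : Fq) (s t : ℕ) :
    (c • (ap ^ s * ((qfact (t+1))⁻¹ • a ^ (t+1)))) * ap
      = (c * q ^ (2*(t:ℤ)+2)) • (ap ^ (s+1) * ((qfact (t+1))⁻¹ • a ^ (t+1)))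
        + (c * q ^ (t:ℤ)) • (ap ^ s * ((qfact t)⁻¹ • a ^ t)) := by
  calc (c • (ap ^ s * ((qfact (t+1))⁻¹ • a ^ (t+1)))) * ap
      = c • (ap ^ s * (((qfact (t+1))⁻¹ • a ^ (t+1)) * ap)) := by
        rw [smul_mul_assoc, mul_assoc]
    _ = c • (ap ^ s * ((q ^ (2*(t:ℤ)+2) : Fq) • (ap * ((qfact (t+1))⁻¹ • a ^ (t+1)))
          + (q ^ (t:ℤ) : Fq) • ((qfact t)⁻¹ • a ^ t))) := by
        rw [dpow_mul_ap a ap h t]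
    _ = c • ((q ^ (2*(t:ℤ)+2) : Fq) • (ap ^ (s+1) * ((qfact (t+1))⁻¹ • a ^ (t+1)))
          + (q ^ (t:ℤ) : Fq) • (ap ^ s * ((qfact t)⁻¹ • a ^ t))) := by
        rw [mul_add, mul_smul_comm (q ^ (2*(t:ℤ)+2) : Fq) (ap ^ s)
              (ap * ((qfact (t+1))⁻¹ • a ^ (t+1))),
            mul_smul_comm (q ^ (t:ℤ) : Fq) (ap ^ s) ((qfact t)⁻¹ • a ^ t),
            ← mul_assoc (ap ^ s) ap, ← pow_succ]
    _ = (c * q ^ (2*(t:ℤ)+2)) • (ap ^ (s+1) * ((qfact (t+1))⁻¹ • a ^ (t+1)))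
        + (c * q ^ (t:ℤ)) • (ap ^ s * ((qfact t)⁻¹ • a ^ t)) := by
        rw [smul_add, smul_smul, smul_smul]

lemma coeff_pascal (n m s : ℕ) :
    q ^ ((n:ℤ)*(((s:ℤ)+1)+((m:ℤ)+1)) + (Tn (s+1) : ℤ) - Tn (m+1)) * qbinom ((m:ℤ)+1) ((s:ℤ)+1)
      = q ^ ((n:ℤ)*((s:ℤ)+(m:ℤ)) + (Tn s:ℤ) - Tn m) * qbinom (m:ℤ) (s:ℤ) * q ^ (2*((n:ℤ)-(m:ℤ)+(s:ℤ)))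
      + q ^ ((n:ℤ)*(((s:ℤ)+1)+(m:ℤ)) + (Tn (s+1):ℤ) - Tn m) * qbinom (m:ℤ) ((s:ℤ)+1)
          * q ^ ((n:ℤ)-(m:ℤ)+(s:ℤ)) := by
  rw [qbinom_pascal, mul_add]
  have h1 : q ^ ((n:ℤ)*(((s:ℤ)+1)+((m:ℤ)+1)) + (Tn (s+1) : ℤ) - Tn (m+1)) * q ^ ((s:ℤ) + 1)
      = q ^ ((n:ℤ)*(((s:ℤ)+1)+(m:ℤ)) + (Tn (s+1):ℤ) - Tn m + ((n:ℤ)-(m:ℤ)+(s:ℤ))) := by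
    rw [← zpow_add₀ q_ne_zero]
    congr 1
    rw [Tn_succ_cast (m)]
    ring
  have h2 : q ^ ((n:ℤ)*(((s:ℤ)+1)+((m:ℤ)+1)) + (Tn (s+1) : ℤ) - Tn (m+1)) * q ^ ((s:ℤ) - (m:ℤ))
      = q ^ ((n:ℤ)*((s:ℤ)+(m:ℤ)) + (Tn s:ℤ) - Tn m + 2*((n:ℤ)-(m:ℤ)+(s:ℤ))) := by
    rw [← zpow_add₀ q_ne_zero]
    congr 1
    rw [Tn_succ_cast m, Tn_succ_cast s]
    ring
  rw [← mul_assoc, ← mul_assoc, h1, h2,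
      zpow_add₀ q_ne_zero ((n:ℤ)*(((s:ℤ)+1)+(m:ℤ)) + (Tn (s+1):ℤ) - Tn m),
      zpow_add₀ q_ne_zero ((n:ℤ)*((s:ℤ)+(m:ℤ)) + (Tn s:ℤ) - Tn m)]
  ring

lemma clean_version {A : Type*} [Ring A] [Algebra Fq A]
    (a ap : A) (h : a * ap - (q ^ 2 : Fq) • (ap * a) = 1)
    (n m : ℕ) (hmn : m ≤ n) :
    ((qfact n)⁻¹ • a ^ n) * ap ^ m =
      ∑ s ∈ Finset.range (m + 1),
        (q ^ ((n : ℤ) * ((s : ℤ) + (m:ℤ)) + (Tn s : ℤ) - (Tn m : ℤ)) * qbinom (m:ℤ) (s:ℤ)) •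
          (ap ^ s * ((qfact (n - m + s))⁻¹ • a ^ (n - m + s))) := by
  induction m with
  | zero =>
    simp [qbinom, qfact, Tn]
  | succ m ih =>
    have hm1 : m ≤ n := Nat.le_of_succ_le hmn
    have IH := ih hm1
    rw [pow_succ, ← mul_assoc, IH, Finset.sum_mul]
    have key : ∀ s ∈ Finset.range (m+1),
        ((q ^ ((n : ℤ) * ((s : ℤ) + (m:ℤ)) + (Tn s : ℤ) - (Tn m : ℤ)) * qbinom (m:ℤ) (s:ℤ)) •
          (ap ^ s * ((qfact (n - m + s))⁻¹ • a ^ (n - m + s)))) * ap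
        = ((q ^ ((n : ℤ) * ((s : ℤ) + (m:ℤ)) + (Tn s : ℤ) - (Tn m : ℤ)) * qbinom (m:ℤ) (s:ℤ))
              * q ^ (2*((n:ℤ)-(m:ℤ)+(s:ℤ)))) •
            (ap ^ (s+1) * ((qfact (n - (m+1) + (s+1)))⁻¹ • a ^ (n - (m+1) + (s+1))))
          + ((q ^ ((n : ℤ) * ((s : ℤ) + (m:ℤ)) + (Tn s : ℤ) - (Tn m : ℤ)) * qbinom (m:ℤ) (s:ℤ))
              * q ^ ((n:ℤ)-(m:ℤ)+(s:ℤ)-1)) •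
            (ap ^ s * ((qfact (n - (m+1) + s))⁻¹ • a ^ (n - (m+1) + s))) := by
      intro s hs
      have ht : n - m + s = (n - (m+1) + s) + 1 := by omega
      rw [ht, term_step a ap h _ s (n - (m+1) + s)]
      have hc1 : (2*((n - (m+1) + s : ℕ):ℤ)+2) = 2*((n:ℤ)-(m:ℤ)+(s:ℤ)) := by
        push_cast
        omega
      have hc2 : ((n - (m+1) + s : ℕ):ℤ) = (n:ℤ)-(m:ℤ)+(s:ℤ)-1 := by
        push_cast
        omega
      rw [hc1, hc2, show n - (m+1) + s + 1 = n - (m+1) + (s+1) by omega]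
    rw [Finset.sum_congr rfl key, Finset.sum_add_distrib]
    -- Now handle the target side.
    rw [Finset.sum_range_succ' _ (m+1)]
    have lhs2 : (∑ s ∈ Finset.range (m+1),
          ((q ^ ((n : ℤ) * ((s : ℤ) + (m:ℤ)) + (Tn s : ℤ) - (Tn m : ℤ)) * qbinom (m:ℤ) (s:ℤ))
              * q ^ ((n:ℤ)-(m:ℤ)+(s:ℤ)-1)) •
            (ap ^ s * ((qfact (n - (m+1) + s))⁻¹ • a ^ (n - (m+1) + s))))
        = (∑ s ∈ Finset.range (m+1),
          ((q ^ ((n : ℤ) * (((s:ℤ)+1) + (m:ℤ)) + (Tn (s+1) : ℤ) - (Tn m : ℤ))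
              * qbinom (m:ℤ) ((s:ℤ)+1))
              * q ^ ((n:ℤ)-(m:ℤ)+(s:ℤ))) •
            (ap ^ (s+1) * ((qfact (n - (m+1) + (s+1)))⁻¹ • a ^ (n - (m+1) + (s+1)))))
          + ((q ^ ((n : ℤ) * ((0 : ℤ) + (m:ℤ)) + (Tn 0 : ℤ) - (Tn m : ℤ)) * qbinom (m:ℤ) (0:ℤ))
              * q ^ ((n:ℤ)-(m:ℤ)+(0:ℤ)-1)) •
            (ap ^ 0 * ((qfact (n - (m+1) + 0))⁻¹ • a ^ (n - (m+1) + 0))) := by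
      conv_rhs => rw [Finset.sum_range_succ]
      rw [show qbinom (m:ℤ) ((m:ℤ)+1) = 0 from qbinom_overflow m]
      rw [Finset.sum_range_succ' _ m]
      simp only [mul_zero, zero_mul, zero_smul, add_zero]
      congr 1
      · apply Finset.sum_congr rfl
        intro s hs
        congr 1
        push_cast
        ring
      · congr 1
        push_cast
        ring
    rw [lhs2, ← add_assoc, ← Finset.sum_add_distrib]
    congr 1
    · apply Finset.sum_congr rfl
      intro s hs
      rw [← add_smul]
      congr 1
      push_cast
      linear_combination -coeff_pascal n m s
    · congr 1
      push_cast
      rw [qbinom_zero, qbinom_zero, mul_one, mul_one, ← zpow_add₀ q_ne_zero]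
      congr 1
      rw [Tn_succ_cast m]
      simp only [Tn_zero, Nat.cast_zero]
      ring

/-- In the q-boson algebra with `a a⁺ - q² a⁺ a = 1`, for `n ≥ m ≥ 0`:
`a^(n) · (a⁺)^m = Σ_{s=0}^{m} q^{n(s+m)} q^{(s-m)(s+m+1)/2} [m choose s]_q (a⁺)^s a^(n-m+s)`,
where `a^(k) = a^k/[k]_q!`. -/
theorem qboson_divided_pow_mul_pow {A : Type*} [Ring A] [Algebra Fq A]
    (a ap : A) (h : a * ap - (q ^ 2 : Fq) • (ap * a) = 1)
    (n m : ℕ) (hmn : m ≤ n) :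
    ((qfact n)⁻¹ • a ^ n) * ap ^ m =
      ∑ s ∈ Finset.range (m + 1),
        (q ^ ((n : ℤ) * ((s : ℤ) + m)) *
         q ^ ((((s : ℤ) - m) * ((s : ℤ) + m + 1)) / 2) *
         qbinom m s) •
          (ap ^ s * ((qfact (n - m + s))⁻¹ • a ^ (n - m + s))) := by
  rw [clean_version a ap h n m hmn]
  apply Finset.sum_congr rfl
  intro s hs
  congr 1
  rw [E_eq m s, ← zpow_add₀ q_ne_zero]
  congr 2
  ring
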